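/- arXiv:2302.12929 — 3 statements merged into one kernel-verified Lean document; each statement's English description precedes it below -/
import Mathlib

section
/- Every DSRI positive semi-definite kernel on ℤ₊ × ℤ₊ is stable: if ∑_{t∈ℕ} k(t,t)^{1/2} < ∞, then for every bounded sequence u : ℕ → ℝ, ∑_{t∈ℕ} |∑_{s∈ℕ} u(s) k(t,s)| < ∞. -/
def IsPSDKernel (k : ℕ → ℕ → ℝ) : Prop :=
  (∀ s t, k s t = k t s) ∧
  ∀ (n : ℕ) (t : Fin n → ℕ) (a : Fin n → ℝ),
    0 ≤ ∑ i, ∑ j, a i * k (t i) (t j) * a j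

theorem psd_diag_nonneg (k : ℕ → ℕ → ℝ) (hk : IsPSDKernel k) (t : ℕ) : 0 ≤ k t t := by
  have h := hk.2 1 (fun _ => t) (fun _ => 1)
  simpa using h

theorem psd_cs (k : ℕ → ℕ → ℝ) (hk : IsPSDKernel k) (t s : ℕ) :
    |k t s| ≤ Real.sqrt (k t t) * Real.sqrt (k s s) := by
  have hquad : ∀ x : ℝ, 0 ≤ k t t * x ^ 2 + (2 * k t s) * x + k s s := by
    intro x
    have h := hk.2 2 ![t, s] ![x, 1]
    have hsym := hk.1 s t
    simp [Fin.sum_univ_two, hsym] at h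
    nlinarith [h]
  have hd : discrim (k t t) (2 * k t s) (k s s) ≤ 0 := by
    rcases eq_or_lt_of_le (psd_diag_nonneg k hk t) with h0 | h0
    · -- k t t = 0; then 2*k t s * x + k s s ≥ 0 for all x forces k t s = 0
      have hts : k t s = 0 := by
        by_contra hne
        have := hquad (-(k s s + 1) / (2 * k t s))
        rw [← h0] at this
        have h2 : (2 * k t s) ≠ 0 := by simpa using hne
        field_simp at this
        have hpos : 0 < k t s ^ 2 := lt_of_le_of_ne (sq_nonneg _) (Ne.symm (pow_ne_zero 2 hne))
        rw [le_div_iff₀ hpos] at this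
        nlinarith [sq_nonneg (k t s)]
      rw [discrim, ← h0, hts]; ring_nf; simp
    · exact discrim_le_zero (by intro x; nlinarith [hquad x])
  rw [discrim] at hd
  have hsq : k t s ^ 2 ≤ k t t * k s s := by nlinarith
  calc |k t s| = Real.sqrt ((k t s) ^ 2) := by rw [Real.sqrt_sq_eq_abs]
    _ ≤ Real.sqrt (k t t * k s s) := Real.sqrt_le_sqrt hsq
    _ = Real.sqrt (k t t) * Real.sqrt (k s s) :=
        Real.sqrt_mul (psd_diag_nonneg k hk t) _

theorem stmt6 (k : ℕ → ℕ → ℝ) (hk : IsPSDKernel k)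
    (hkS : Summable fun t => Real.sqrt (k t t))
    (u : ℕ → ℝ) (hu : ∃ C : ℝ, ∀ s, |u s| ≤ C) :
    (∀ t, Summable fun s => u s * k t s) ∧
    Summable (fun t => |∑' s : ℕ, u s * k t s|) := by
  obtain ⟨C, hC⟩ := hu
  have hC0 : 0 ≤ C := le_trans (abs_nonneg _) (hC 0)
  have hbound : ∀ t s, |u s * k t s| ≤ C * Real.sqrt (k t t) * Real.sqrt (k s s) := by
    intro t s
    rw [abs_mul]
    calc |u s| * |k t s| ≤ C * (Real.sqrt (k t t) * Real.sqrt (k s s)) :=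
          mul_le_mul (hC s) (psd_cs k hk t s) (abs_nonneg _)
            hC0
      _ = C * Real.sqrt (k t t) * Real.sqrt (k s s) := by ring
  have hsum : ∀ t, Summable fun s => |u s * k t s| := by
    intro t
    exact Summable.of_nonneg_of_le (fun s => abs_nonneg _) (hbound t)
      ((hkS.mul_left (C * Real.sqrt (k t t))))
  have hsum' : ∀ t, Summable fun s => u s * k t s := fun t => (hsum t).of_abs
  refine ⟨hsum', ?_⟩
  have hS0 : 0 ≤ ∑' s, Real.sqrt (k s s) :=
    tsum_nonneg (fun s => Real.sqrt_nonneg _)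
  refine Summable.of_nonneg_of_le (f := fun t => (C * ∑' s, Real.sqrt (k s s)) * Real.sqrt (k t t))
    (fun t => abs_nonneg _) (fun t => ?_) (hkS.mul_left _)
  calc |∑' s, u s * k t s| ≤ ∑' s, |u s * k t s| := by
          simpa [abs_mul] using norm_tsum_le_tsum_norm (f := fun s => u s * k t s) (by simpa [abs_mul] using hsum t)
      _ ≤ ∑' s, C * Real.sqrt (k t t) * Real.sqrt (k s s) :=
          Summable.tsum_le_tsum (hbound t) (hsum t) (hkS.mul_left _)
      _ = (C * ∑' s, Real.sqrt (k s s)) * Real.sqrt (k t t) := by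
          rw [tsum_mul_left]; ring
end

section
/- There exists a positive semi-definite kernel on ℤ₊ × ℤ₊ that is integrable but not DSRI; concretely, k(s,t) = 1/(1+s)² if s = t and k(s,t) = 0 otherwise satisfies: k is positive semi-definite, ∑_{s,t} |k(s,t)| = π²/6 < ∞, and ∑_t k(t,t)^{1/2} = ∑_t 1/(1+t) = ∞. -/
noncomputable def diagKernel (s t : ℕ) : ℝ :=
  if s = t then 1 / ((1 : ℝ) + s) ^ 2 else 0

private lemma hasSum_g : HasSum (fun n : ℕ => 1 / ((1 : ℝ) + n) ^ 2) (Real.pi ^ 2 / 6) := by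
  have h := hasSum_zeta_two
  rw [← hasSum_nat_add_iff' 1] at h
  simp only [Finset.range_one, Finset.sum_singleton, Nat.cast_zero] at h
  norm_num at h
  convert h using 2 with n
  · rfl
  · ring_nf

theorem stmt7 :
    IsPSDKernel diagKernel ∧
    Summable (fun p : ℕ × ℕ => |diagKernel p.1 p.2|) ∧
    ∑' p : ℕ × ℕ, |diagKernel p.1 p.2| = Real.pi ^ 2 / 6 ∧
    ¬ Summable (fun t : ℕ => Real.sqrt (diagKernel t t)) := by
  have hfpos : ∀ v : ℕ, (0:ℝ) < 1 / ((1:ℝ) + v) ^ 2 := by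
    intro v; positivity
  have habs : (fun p : ℕ × ℕ => |diagKernel p.1 p.2|) =
      fun p : ℕ × ℕ => diagKernel p.1 p.2 := by
    funext p
    apply abs_of_nonneg
    unfold diagKernel
    split
    · positivity
    · exact le_refl 0
  have hS : HasSum (fun p : ℕ × ℕ => |diagKernel p.1 p.2|) (Real.pi ^ 2 / 6) := by
    rw [habs]
    have hinj : Function.Injective (fun n : ℕ => ((n, n) : ℕ × ℕ)) := by
      intro a b hab; exact (Prod.mk.injEq ..).mp hab |>.1
    rw [← Function.Injective.hasSum_iff hinj]
    · have : (fun p : ℕ × ℕ => diagKernel p.1 p.2) ∘ (fun n : ℕ => ((n, n) : ℕ × ℕ))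
          = fun n : ℕ => 1 / ((1:ℝ) + n) ^ 2 := by
        funext n
        simp [diagKernel]
      rw [this]
      exact hasSum_g
    · intro p hp
      unfold diagKernel
      split
      · exact absurd ⟨p.1, by rename_i h; rw [Prod.ext_iff]; exact ⟨rfl, h⟩⟩ hp
      · rfl
  refine ⟨⟨?_, ?_⟩, ?_, ?_, ?_⟩
  · intro s t
    unfold diagKernel
    by_cases h : s = t
    · subst h; simp
    · rw [if_neg h, if_neg (Ne.symm h)]
  · intro n t a
    have key : ∑ i, ∑ j, a i * diagKernel (t i) (t j) * a j
        = ∑ v ∈ Finset.image t Finset.univ,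
            (1 / ((1:ℝ) + v) ^ 2) * (∑ i ∈ Finset.univ.filter (fun i => t i = v), a i) ^ 2 := by
      have step1 : ∀ i, ∑ j, a i * diagKernel (t i) (t j) * a j
          = a i * (1 / ((1:ℝ) + t i) ^ 2) *
              (∑ j ∈ Finset.univ.filter (fun j => t j = t i), a j) := by
        intro i
        rw [Finset.mul_sum, ← Finset.sum_filter_add_sum_filter_not Finset.univ (fun j => t j = t i)]
        have h2 : ∑ j ∈ Finset.univ.filter (fun j => ¬ t j = t i),
            a i * diagKernel (t i) (t j) * a j = 0 := by
          apply Finset.sum_eq_zero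
          intro j hj
          simp only [Finset.mem_filter] at hj
          unfold diagKernel
          rw [if_neg (fun h => hj.2 h.symm)]
          ring
        rw [h2, add_zero]
        apply Finset.sum_congr rfl
        intro j hj
        simp only [Finset.mem_filter] at hj
        unfold diagKernel
        rw [if_pos hj.2.symm]
      calc ∑ i, ∑ j, a i * diagKernel (t i) (t j) * a j
          = ∑ i, a i * (1 / ((1:ℝ) + t i) ^ 2) *
              (∑ j ∈ Finset.univ.filter (fun j => t j = t i), a j) := by
            exact Finset.sum_congr rfl fun i _ => step1 i
        _ = ∑ v ∈ Finset.image t Finset.univ,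
              ∑ i ∈ Finset.univ.filter (fun i => t i = v),
                a i * (1 / ((1:ℝ) + t i) ^ 2) *
                  (∑ j ∈ Finset.univ.filter (fun j => t j = t i), a j) := by
            rw [Finset.sum_fiberwise_of_maps_to]
            intro i _
            exact Finset.mem_image_of_mem t (Finset.mem_univ i)
        _ = _ := by
            apply Finset.sum_congr rfl
            intro v _
            have : ∀ i ∈ Finset.univ.filter (fun i => t i = v),
                a i * (1 / ((1:ℝ) + t i) ^ 2) *
                  (∑ j ∈ Finset.univ.filter (fun j => t j = t i), a j)
                = a i * ((1 / ((1:ℝ) + v) ^ 2) *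
                    (∑ j ∈ Finset.univ.filter (fun j => t j = v), a j)) := by
              intro i hi
              simp only [Finset.mem_filter] at hi
              rw [hi.2]; ring
            rw [Finset.sum_congr rfl this, ← Finset.sum_mul]
            ring
    rw [key]
    apply Finset.sum_nonneg
    intro v _
    positivity
  · exact hS.summable
  · exact hS.tsum_eq
  · intro h
    have heq : (fun t : ℕ => Real.sqrt (diagKernel t t)) = fun t : ℕ => 1 / ((t:ℝ) + 1) := by
      funext t
      unfold diagKernel
      rw [if_pos rfl, one_div, Real.sqrt_inv, Real.sqrt_sq (by positivity)]
      rw [one_div, add_comm]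
    rw [heq] at h
    have h' : Summable (fun n : ℕ => 1 / ((n + 1 : ℕ) : ℝ)) := by
      convert h using 2 with n; push_cast; ring
    exact Real.not_summable_one_div_natCast ((summable_nat_add_iff 1).1 h')
end

section
/- Let (gₜ)_{t∈ℕ} be a family of jointly Gaussian random variables on a probability space with mean zero and covariance E[g_s g_t] = k(s,t) for a positive semi-definite kernel k. If P[∑_{t∈ℕ} |g_t| < ∞] > 0, then k is DSRI, i.e., ∑_{t∈ℕ} k(t,t)^{1/2} < ∞. Moreover the bound ∑_t k(t,t)^{1/2} ≤ 2r/(γ ε) holds, where γ = P[∑_t |g_t| ≤ r] > 0 for some r ∈ ℕ and ε = Φ^{-1}(γ/2), with Φ(δ) = P[|Z| ≤ δ] for a standard Gaussian Z. -/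
open MeasureTheory ProbabilityTheory
open scoped ENNReal NNReal

/-- Φ(δ) = P[|Z| ≤ δ] for a standard Gaussian Z. -/
noncomputable def gaussPhi (δ : ℝ) : ℝ :=
  ((gaussianReal 0 1) (Set.Icc (-δ) δ)).toReal

lemma aux_iff (f : ℕ → ℝ) (hf : ∀ t, 0 ≤ f t) (r : ℝ) (hr : 0 ≤ r) :
    (Summable f ∧ ∑' t, f t ≤ r) ↔ ∑' t, ENNReal.ofReal (f t) ≤ ENNReal.ofReal r := by
  constructor
  · rintro ⟨hs, hle⟩
    rw [← ENNReal.ofReal_tsum_of_nonneg hf hs]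
    exact ENNReal.ofReal_le_ofReal hle
  · intro h
    have hne : ∑' t, ENNReal.ofReal (f t) ≠ ⊤ := (h.trans_lt ENNReal.ofReal_lt_top).ne
    have hs' : Summable (fun t => (f t).toNNReal) :=
      ENNReal.tsum_coe_ne_top_iff_summable.1 hne
    have hs : Summable f := by
      have h2 := NNReal.summable_coe.2 hs'
      refine h2.congr fun t => ?_
      exact Real.coe_toNNReal _ (hf t)
    refine ⟨hs, ?_⟩
    rw [← ENNReal.ofReal_tsum_of_nonneg hf hs] at h
    exact (ENNReal.ofReal_le_ofReal_iff hr).1 h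

lemma gaussPhi_zero : gaussPhi 0 = 0 := by
  have h : (gaussianReal 0 1) (Set.Icc (-(0:ℝ)) 0) = 0 := by
    rw [neg_zero, Set.Icc_self]
    exact gaussianReal_absolutelyContinuous 0 one_ne_zero (measure_singleton 0)
  rw [gaussPhi, h]; simp

lemma gaussPhi_eq (δ : ℝ) : gaussPhi δ = ∫ x in Set.Icc (-δ) δ, gaussianPDFReal 0 1 x := by
  rw [gaussPhi, gaussianReal_apply_eq_integral 0 one_ne_zero, ENNReal.toReal_ofReal]
  exact setIntegral_nonneg measurableSet_Icc fun x _ => gaussianPDFReal_nonneg 0 1 x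

lemma gaussPhi_contOn : ContinuousOn gaussPhi (Set.Ici 0) := by
  have hint : Integrable (gaussianPDFReal 0 1) := integrable_gaussianPDFReal 0 1
  have hH : Continuous (fun y => ∫ x in (0:ℝ)..y, gaussianPDFReal 0 1 x) :=
    hint.continuous_primitive 0
  have hc : ContinuousOn (fun δ => (∫ x in (0:ℝ)..δ, gaussianPDFReal 0 1 x)
      - ∫ x in (0:ℝ)..(-δ), gaussianPDFReal 0 1 x) (Set.Ici 0) :=
    (hH.sub (hH.comp continuous_neg)).continuousOn
  refine hc.congr ?_
  intro δ hδ
  have hδ0 : (0:ℝ) ≤ δ := hδ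
  calc gaussPhi δ = ∫ x in Set.Icc (-δ) δ, gaussianPDFReal 0 1 x := gaussPhi_eq δ
    _ = ∫ x in Set.Ioc (-δ) δ, gaussianPDFReal 0 1 x := integral_Icc_eq_integral_Ioc
    _ = ∫ x in (-δ)..δ, gaussianPDFReal 0 1 x :=
        (intervalIntegral.integral_of_le (by linarith)).symm
    _ = (∫ x in (-δ)..(0:ℝ), gaussianPDFReal 0 1 x) + ∫ x in (0:ℝ)..δ, gaussianPDFReal 0 1 x :=
        (intervalIntegral.integral_add_adjacent_intervals hint.intervalIntegrable
          hint.intervalIntegrable).symm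
    _ = (∫ x in (0:ℝ)..δ, gaussianPDFReal 0 1 x) - ∫ x in (0:ℝ)..(-δ), gaussianPDFReal 0 1 x := by
        rw [intervalIntegral.integral_symm]; ring

lemma exists_gaussPhi {γ : ℝ} (h0 : 0 < γ) (h1 : γ ≤ 1) :
    ∃ ε : ℝ, 0 < ε ∧ gaussPhi ε = γ / 2 := by
  obtain ⟨M, hM0, hMge⟩ : ∃ M : ℝ, 0 ≤ M ∧ γ/2 ≤ gaussPhi M := by
    have hmono : Monotone (fun n : ℕ => Set.Icc (-(n:ℝ)) (n:ℝ)) := by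
      intro n m h
      exact Set.Icc_subset_Icc (by exact_mod_cast neg_le_neg (Nat.cast_le.2 h)) (by exact_mod_cast h)
    have hunion : (⋃ n : ℕ, Set.Icc (-(n:ℝ)) (n:ℝ)) = Set.univ := by
      ext x
      simp only [Set.mem_iUnion, Set.mem_univ, iff_true, Set.mem_Icc]
      obtain ⟨n, hn⟩ := exists_nat_ge |x|
      obtain ⟨ha, hb⟩ := abs_le.1 hn
      exact ⟨n, ha, hb⟩
    have htend := tendsto_measure_iUnion_atTop (μ := gaussianReal 0 1) hmono
    rw [hunion, measure_univ] at htend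
    have h1' : (ENNReal.ofReal (γ/2)) < 1 := ENNReal.ofReal_lt_one.2 (by linarith)
    have hev := htend.eventually (eventually_gt_nhds h1')
    obtain ⟨n, hn⟩ := hev.exists
    refine ⟨n, Nat.cast_nonneg n, ?_⟩
    have h2 := ENNReal.toReal_mono (measure_ne_top _ _) hn.le
    rwa [ENNReal.toReal_ofReal (by linarith)] at h2
  have hivt := intermediate_value_Icc hM0 (gaussPhi_contOn.mono Set.Icc_subset_Ici_self)
  have hmem : γ/2 ∈ Set.Icc (gaussPhi 0) (gaussPhi M) := by
    rw [gaussPhi_zero]; exact ⟨by linarith, hMge⟩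
  obtain ⟨ε, hε, hεval⟩ := hivt hmem
  refine ⟨ε, ?_, hεval⟩
  rcases lt_or_eq_of_le hε.1 with h | h
  · exact h
  · exfalso; rw [← h, gaussPhi_zero] at hεval; linarith

theorem stmt19 {Ω : Type*} [MeasurableSpace Ω] (P : Measure Ω) [IsProbabilityMeasure P]
    (k : ℕ → ℕ → ℝ) (hk : IsPSDKernel k)
    (g : ℕ → Ω → ℝ) (hmeas : ∀ t, Measurable (g t))
    (hgauss : ∀ t, P.map (g t) = gaussianReal 0 (Real.toNNReal (k t t)))
    (hcov : ∀ s t, ∫ ω, g s ω * g t ω ∂P = k s t)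
    (hpos : 0 < P {ω | Summable fun t => |g t ω|}) :
    Summable (fun t => Real.sqrt (k t t)) ∧
    ∃ (r : ℕ) (γ ε : ℝ), 0 < γ ∧
      γ = (P {ω | Summable (fun t => |g t ω|) ∧ ∑' t : ℕ, |g t ω| ≤ r}).toReal ∧
      gaussPhi ε = γ / 2 ∧
      ∑' t : ℕ, Real.sqrt (k t t) ≤ 2 * r / (γ * ε) := by
  classical
  set σ : ℕ → ℝ := fun t => Real.sqrt (k t t) with hσdef
  have hknn : ∀ t, 0 ≤ k t t := by
    intro t
    have h := hk.2 1 (fun _ => t) (fun _ => 1)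
    simpa using h
  set F : Ω → ℝ≥0∞ := fun ω => ∑' t, ENNReal.ofReal |g t ω| with hFdef
  have hFmeas : Measurable F :=
    Measurable.ennreal_tsum fun t => ((hmeas t).abs).ennreal_ofReal
  have hiff : ∀ (ω : Ω) (r : ℕ),
      (Summable (fun t => |g t ω|) ∧ ∑' t, |g t ω| ≤ (r:ℝ)) ↔ F ω ≤ (r:ℝ≥0∞) := by
    intro ω r
    rw [show ((r:ℝ≥0∞)) = ENNReal.ofReal (r:ℝ) by simp]
    exact aux_iff _ (fun t => abs_nonneg _) _ (Nat.cast_nonneg r)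
  set A : ℕ → Set Ω :=
    fun r => {ω | Summable (fun t => |g t ω|) ∧ ∑' t : ℕ, |g t ω| ≤ (r:ℝ)} with hAdef
  have hAeq : ∀ r, A r = F ⁻¹' (Set.Iic (r:ℝ≥0∞)) := by
    intro r; ext ω; exact hiff ω r
  have hAmeas : ∀ r, MeasurableSet (A r) := by
    intro r; rw [hAeq r]; exact hFmeas measurableSet_Iic
  -- find r with positive probability
  obtain ⟨r, hrpos⟩ : ∃ r : ℕ, 0 < P (A r) := by
    by_contra h
    push_neg at h
    have h0 : ∀ r : ℕ, P (A r) = 0 := fun r => le_antisymm (h r) zero_le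
    have hsub : {ω | Summable fun t => |g t ω|} ⊆ ⋃ r : ℕ, A r := by
      intro ω hω
      obtain ⟨n, hn⟩ := exists_nat_ge (∑' t, |g t ω|)
      exact Set.mem_iUnion.2 ⟨n, hω, hn⟩
    have : P {ω | Summable fun t => |g t ω|} = 0 :=
      measure_mono_null hsub (measure_iUnion_null h0)
    exact absurd this (ne_of_gt hpos)
  set γE := P (A r) with hγEdef
  set γ := γE.toReal with hγdef
  have hγE_ne : γE ≠ ⊤ := measure_ne_top P _
  have hγpos : 0 < γ := ENNReal.toReal_pos (ne_of_gt hrpos) hγE_ne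
  have hγle1 : γ ≤ 1 := by
    have h := prob_le_one (μ := P) (s := A r)
    have := ENNReal.toReal_mono (by simp) h
    simpa using this
  obtain ⟨ε, hεpos, hΦ⟩ := exists_gaussPhi hγpos hγle1
  set ΦE := gaussianReal 0 1 (Set.Icc (-ε) ε) with hΦEdef
  have hΦE : ΦE = ENNReal.ofReal (γ/2) := by
    rw [← hΦ, gaussPhi, ENNReal.ofReal_toReal (measure_ne_top _ _)]
  have hγEeq : γE = ENNReal.ofReal γ := (ENNReal.ofReal_toReal hγE_ne).symm
  have hsub : γE - ΦE = ENNReal.ofReal (γ/2) := by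
    rw [hγEeq, hΦE, ← ENNReal.ofReal_sub _ (by linarith)]
    congr 1; ring
  -- key per-t bound
  have key : ∀ t, ENNReal.ofReal (ε * (γ/2) * σ t) ≤ ∫⁻ ω in A r, ENNReal.ofReal |g t ω| ∂P := by
    intro t
    rcases eq_or_lt_of_le (Real.sqrt_nonneg (k t t)) with h0 | hσpos
    · have : σ t = 0 := h0.symm
      simp [this]
    have hmap : P {ω | |g t ω| ≤ ε * σ t} = ΦE := by
      have hpre : {ω | |g t ω| ≤ ε * σ t} = g t ⁻¹' Set.Icc (-(ε * σ t)) (ε * σ t) := by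
        ext ω; simp [abs_le]
      rw [hpre, ← Measure.map_apply (hmeas t) measurableSet_Icc, hgauss t]
      have hv : (Real.toNNReal (k t t)) = (NNReal.mk (σ t ^ 2) (sq_nonneg _) * 1 : ℝ≥0) := by
        ext
        simp [hσdef, Real.sq_sqrt (hknn t), Real.coe_toNNReal _ (hknn t)]
      have hmul := gaussianReal_map_const_mul (μ := 0) (v := 1) (σ t)
      rw [mul_zero] at hmul
      rw [hv, ← hmul, Measure.map_apply (measurable_const_mul _) measurableSet_Icc]
      rw [hΦEdef]
      congr 1
      rw [Set.preimage_const_mul_Icc₀ _ _ hσpos]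
      have hne : σ t ≠ 0 := ne_of_gt hσpos
      rw [neg_div, mul_div_cancel_right₀ _ hne]
    set B := {ω | ε * σ t < |g t ω|} with hBdef
    have hBmeas : MeasurableSet B := measurableSet_lt measurable_const (hmeas t).abs
    have h1 : γE - ΦE ≤ P (A r ∩ B) := by
      rw [tsub_le_iff_right]
      calc γE = P (A r) := rfl
        _ ≤ P ((A r ∩ B) ∪ Bᶜ) := measure_mono (by
            intro ω hω
            by_cases hb : ω ∈ B
            · exact Or.inl ⟨hω, hb⟩
            · exact Or.inr hb)
        _ ≤ P (A r ∩ B) + P Bᶜ := measure_union_le _ _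
        _ = P (A r ∩ B) + ΦE := by
            rw [show Bᶜ = {ω | |g t ω| ≤ ε * σ t} by ext ω; simp [hBdef, not_lt], hmap]
    have h2 : ENNReal.ofReal (ε * σ t) * P (A r ∩ B)
        ≤ ∫⁻ ω in A r, ENNReal.ofReal |g t ω| ∂P := by
      calc ENNReal.ofReal (ε * σ t) * P (A r ∩ B)
          = ∫⁻ _ in A r ∩ B, ENNReal.ofReal (ε * σ t) ∂P := (setLIntegral_const _ _).symm
        _ ≤ ∫⁻ ω in A r ∩ B, ENNReal.ofReal |g t ω| ∂P :=
            setLIntegral_mono ((hmeas t).abs.ennreal_ofReal)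
              (fun ω hω => ENNReal.ofReal_le_ofReal (le_of_lt hω.2))
        _ ≤ ∫⁻ ω in A r, ENNReal.ofReal |g t ω| ∂P :=
            lintegral_mono_set Set.inter_subset_left
    calc ENNReal.ofReal (ε * (γ/2) * σ t)
        = ENNReal.ofReal (ε * σ t) * ENNReal.ofReal (γ/2) := by
          rw [← ENNReal.ofReal_mul (by positivity)]; ring_nf
      _ = ENNReal.ofReal (ε * σ t) * (γE - ΦE) := by rw [hsub]
      _ ≤ ENNReal.ofReal (ε * σ t) * P (A r ∩ B) := mul_le_mul_right h1 _
      _ ≤ _ := h2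
  -- sum over t
  have hsum : ∑' t, ENNReal.ofReal (ε * (γ/2) * σ t) ≤ ENNReal.ofReal ((r:ℝ) * γ) := by
    calc ∑' t, ENNReal.ofReal (ε * (γ/2) * σ t)
        ≤ ∑' t, ∫⁻ ω in A r, ENNReal.ofReal |g t ω| ∂P := ENNReal.tsum_le_tsum key
      _ = ∫⁻ ω in A r, F ω ∂P :=
          (lintegral_tsum fun t => ((hmeas t).abs.ennreal_ofReal).aemeasurable).symm
      _ ≤ ∫⁻ _ in A r, (r:ℝ≥0∞) ∂P :=
          setLIntegral_mono measurable_const (fun ω hω => (hiff ω r).1 hω)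
      _ = (r:ℝ≥0∞) * γE := setLIntegral_const _ _
      _ = ENNReal.ofReal ((r:ℝ)) * ENNReal.ofReal γ := by
          rw [← hγEeq]; congr 1; simp
      _ = ENNReal.ofReal ((r:ℝ) * γ) := (ENNReal.ofReal_mul (Nat.cast_nonneg r)).symm
  have hne : ∑' t, ENNReal.ofReal (ε * (γ/2) * σ t) ≠ ⊤ :=
    (hsum.trans_lt ENNReal.ofReal_lt_top).ne
  have hc : (0:ℝ) < ε * (γ/2) := by positivity
  have hs : Summable (fun t => ε * (γ/2) * σ t) := by
    have hs' : Summable (fun t => (ε * (γ/2) * σ t).toNNReal) :=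
      ENNReal.tsum_coe_ne_top_iff_summable.1 hne
    have h2 := NNReal.summable_coe.2 hs'
    refine h2.congr fun t => ?_
    exact Real.coe_toNNReal _ (by positivity)
  have hsummable : Summable σ := by
    have h2 := hs.mul_left (ε * (γ/2))⁻¹
    refine h2.congr fun t => ?_
    rw [← mul_assoc, inv_mul_cancel₀ (ne_of_gt hc), one_mul]
  have htsum : ε * (γ/2) * ∑' t, σ t ≤ (r:ℝ) * γ := by
    have h1 : ENNReal.ofReal (∑' t, ε * (γ/2) * σ t) ≤ ENNReal.ofReal ((r:ℝ) * γ) := by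
      rw [ENNReal.ofReal_tsum_of_nonneg (fun t => by positivity) hs]
      exact hsum
    have h2 := (ENNReal.ofReal_le_ofReal_iff (by positivity)).1 h1
    rwa [tsum_mul_left] at h2
  refine ⟨hsummable, r, γ, ε, hγpos, rfl, hΦ, ?_⟩
  have hT : 0 ≤ ∑' t, σ t := tsum_nonneg fun t => Real.sqrt_nonneg _
  rw [le_div_iff₀ (by positivity)]
  nlinarith [htsum, hγle1, hεpos, hγpos, Nat.cast_nonneg (α := ℝ) r, hT]
end
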